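/- Let (Ω, F, ℙ) be a probability space with a filtration (F_n)_{n∈ℕ}, and let (X_n)_{n∈ℕ} be a nonnegative, integrable stochastic process adapted to (F_n) such that ∑_{n=0}^∞ 𝔼[ max(𝔼[X_{n+1} − X_n | F_n], 0) ] < ∞ (bounded positive variations). Then (X_n) is a quasimartingale, i.e. ∑_{n=0}^∞ 𝔼[ |𝔼[X_{n+1} − X_n | F_n]| ] < ∞, and X_n converges almost surely. -/

import Mathlib

open MeasureTheory Filter

theorem stmt_11 {Ω : Type*} {m0 : MeasurableSpace Ω} {μ : Measure Ω}
    [IsProbabilityMeasure μ] (ℱ : Filtration ℕ m0)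
    (X : ℕ → Ω → ℝ) (hadp : Adapted ℱ X)
    (hint : ∀ n, Integrable (X n) μ)
    (hpos : ∀ n ω, 0 ≤ X n ω)
    (hbpv : Summable fun n =>
      ∫ ω, max ((μ[X (n + 1) - X n | ℱ n]) ω) 0 ∂μ) :
    (Summable fun n => ∫ ω, |(μ[X (n + 1) - X n | ℱ n]) ω| ∂μ) ∧
      ∀ᵐ ω ∂μ, ∃ l : ℝ, Tendsto (fun n => X n ω) atTop (nhds l) := by
  set Y : ℕ → Ω → ℝ := fun n => μ[X (n + 1) - X n | ℱ n] with hY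
  have hYint : ∀ n, Integrable (Y n) μ := fun n => integrable_condExp
  -- integral of |Y n| equals 2 * ∫ max (Y n) 0 - (∫ X (n+1) - ∫ X n)
  have habs : ∀ n, (∫ ω, |Y n ω| ∂μ)
      = 2 * (∫ ω, max (Y n ω) 0 ∂μ) - ((∫ ω, X (n + 1) ω ∂μ) - ∫ ω, X n ω ∂μ) := by
    intro n
    have h1 : (∫ ω, |Y n ω| ∂μ) = ∫ ω, (2 * max (Y n ω) 0 - Y n ω) ∂μ := by
      apply integral_congr_ae
      filter_upwards with ω
      rcases le_or_gt 0 (Y n ω) with h | h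
      · rw [max_eq_left h, abs_of_nonneg h]; ring
      · rw [max_eq_right h.le, abs_of_neg h]; ring
    have h2 : (∫ ω, Y n ω ∂μ) = (∫ ω, X (n + 1) ω ∂μ) - ∫ ω, X n ω ∂μ := by
      rw [hY]
      rw [integral_condExp (ℱ.le n)]
      exact integral_sub (hint (n + 1)) (hint n)
    rw [h1, integral_sub ((hYint n).pos_part.const_mul 2) (hYint n),
      integral_const_mul, h2]
  have hmaxnn : ∀ n, 0 ≤ ∫ ω, max (Y n ω) 0 ∂μ := fun n =>
    integral_nonneg fun ω => le_max_right _ _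
  have habsnn : ∀ n, 0 ≤ ∫ ω, |Y n ω| ∂μ := fun n => integral_nonneg fun ω => abs_nonneg _
  set T : ℝ := ∑' n, ∫ ω, max (Y n ω) 0 ∂μ with hT
  -- partial sums bound
  have hbound : ∀ N, ∑ n ∈ Finset.range N, (∫ ω, |Y n ω| ∂μ)
      ≤ 2 * T + ∫ ω, X 0 ω ∂μ := by
    intro N
    have : ∑ n ∈ Finset.range N, (∫ ω, |Y n ω| ∂μ)
        = 2 * (∑ n ∈ Finset.range N, ∫ ω, max (Y n ω) 0 ∂μ)
          - ((∫ ω, X N ω ∂μ) - ∫ ω, X 0 ω ∂μ) := by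
      simp only [habs]
      rw [Finset.sum_sub_distrib, Finset.sum_range_sub (fun n => ∫ ω, X n ω ∂μ),
        ← Finset.mul_sum]
    rw [this]
    have h1 : ∑ n ∈ Finset.range N, (∫ ω, max (Y n ω) 0 ∂μ) ≤ T :=
      hbpv.sum_le_tsum _ (fun i _ => hmaxnn i)
    have h2 : 0 ≤ ∫ ω, X N ω ∂μ := integral_nonneg fun ω => hpos N ω
    nlinarith
  have hsum : Summable fun n => ∫ ω, |Y n ω| ∂μ :=
    summable_of_sum_range_le habsnn hbound
  refine ⟨hsum, ?_⟩
  -- the martingale part converges a.e.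
  set M : ℕ → Ω → ℝ := martingalePart X ℱ μ with hM
  have hMmart : Martingale M ℱ μ := martingale_martingalePart hadp.stronglyAdapted hint
  set S : ℝ := ∑' n, ∫ ω, |Y n ω| ∂μ with hS
  have hSnn : 0 ≤ S := tsum_nonneg habsnn
  -- L¹ bound on M
  have hMbdd : ∀ n, eLpNorm (M n) 1 μ ≤ ENNReal.ofReal ((∫ ω, X 0 ω ∂μ) + 2 * S) := by
    intro n
    have hMint : Integrable (M n) μ := integrable_martingalePart hint n
    rw [eLpNorm_one_eq_lintegral_enorm, ← ofReal_integral_norm_eq_lintegral_enorm hMint]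
    apply ENNReal.ofReal_le_ofReal
    have hXn : (∫ ω, X n ω ∂μ) ≤ (∫ ω, X 0 ω ∂μ) + S := by
      have : (∫ ω, X n ω ∂μ) = (∫ ω, X 0 ω ∂μ)
          + ∑ k ∈ Finset.range n, (∫ ω, Y k ω ∂μ) := by
        have : ∀ k, (∫ ω, Y k ω ∂μ) = (∫ ω, X (k + 1) ω ∂μ) - ∫ ω, X k ω ∂μ := by
          intro k
          rw [hY, integral_condExp (ℱ.le k)]
          exact integral_sub (hint (k + 1)) (hint k)
        simp only [this, Finset.sum_range_sub (fun k => ∫ ω, X k ω ∂μ)]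
        ring
      rw [this]
      gcongr
      calc ∑ k ∈ Finset.range n, (∫ ω, Y k ω ∂μ)
          ≤ ∑ k ∈ Finset.range n, ∫ ω, |Y k ω| ∂μ := by
            apply Finset.sum_le_sum
            intro k _
            exact integral_mono (hYint k) (hYint k).abs fun ω => le_abs_self _
        _ ≤ S := hsum.sum_le_tsum _ (fun i _ => habsnn i)
    have hA : (∫ ω, ‖X n ω‖ ∂μ) ≤ (∫ ω, X 0 ω ∂μ) + S := by
      have : (∫ ω, ‖X n ω‖ ∂μ) = ∫ ω, X n ω ∂μ := by
        apply integral_congr_ae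
        filter_upwards with ω
        exact Real.norm_of_nonneg (hpos n ω)
      rw [this]; exact hXn
    have hB : (∫ ω, (∑ k ∈ Finset.range n, ‖Y k ω‖) ∂μ) ≤ S := by
      rw [integral_finset_sum _ fun k _ => (hYint k).norm]
      calc ∑ k ∈ Finset.range n, (∫ ω, ‖Y k ω‖ ∂μ)
          = ∑ k ∈ Finset.range n, ∫ ω, |Y k ω| ∂μ := by
            simp [Real.norm_eq_abs]
        _ ≤ S := hsum.sum_le_tsum _ (fun i _ => habsnn i)
    calc (∫ ω, ‖M n ω‖ ∂μ)
        ≤ ∫ ω, (‖X n ω‖ + ∑ k ∈ Finset.range n, ‖Y k ω‖) ∂μ := by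
          apply integral_mono_of_nonneg (Eventually.of_forall fun ω => norm_nonneg _)
          · exact (hint n).norm.add (integrable_finset_sum _ fun k _ => (hYint k).norm)
          · filter_upwards with ω
            calc ‖M n ω‖ = ‖X n ω - ∑ k ∈ Finset.range n, Y k ω‖ := by
                  simp [hM, martingalePart, predictablePart, hY]
              _ ≤ ‖X n ω‖ + ‖∑ k ∈ Finset.range n, Y k ω‖ := norm_sub_le _ _
              _ ≤ ‖X n ω‖ + ∑ k ∈ Finset.range n, ‖Y k ω‖ := by
                  gcongr; exact norm_sum_le _ _
      _ = (∫ ω, ‖X n ω‖ ∂μ) + ∫ ω, (∑ k ∈ Finset.range n, ‖Y k ω‖) ∂μ :=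
          integral_add (hint n).norm (integrable_finset_sum _ fun k _ => (hYint k).norm)
      _ ≤ (∫ ω, X 0 ω ∂μ) + 2 * S := by linarith
  have hMconv : ∀ᵐ ω ∂μ, ∃ c, Tendsto (fun n => M n ω) atTop (nhds c) :=
    hMmart.submartingale.exists_ae_tendsto_of_bdd hMbdd
  -- the predictable part converges a.e. (absolutely)
  have hYsum : ∀ᵐ ω ∂μ, Summable fun n => Y n ω := by
    have hlin : (∑' n, ∫⁻ ω, ‖Y n ω‖₊ ∂μ) ≠ ⊤ := by
      have : ∀ n, (∫⁻ ω, ‖Y n ω‖₊ ∂μ) = ENNReal.ofReal (∫ ω, |Y n ω| ∂μ) := by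
        intro n
        show (∫⁻ ω, ‖Y n ω‖ₑ ∂μ) = _
        rw [← ofReal_integral_norm_eq_lintegral_enorm (hYint n)]
        simp [Real.norm_eq_abs]
      rw [funext this, ← ENNReal.ofReal_tsum_of_nonneg habsnn hsum]
      exact ENNReal.ofReal_ne_top
    have hmeas : ∀ n, AEMeasurable (fun ω => (‖Y n ω‖₊ : ENNReal)) μ := fun n =>
      (hYint n).aestronglyMeasurable.aemeasurable.nnnorm.coe_nnreal_ennreal
    have h2 : (∫⁻ ω, ∑' n, (‖Y n ω‖₊ : ENNReal) ∂μ) ≠ ⊤ := by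
      rw [lintegral_tsum hmeas]; exact hlin
    filter_upwards [ae_lt_top' (AEMeasurable.ennreal_tsum hmeas) h2] with ω hω
    have hω' : (∑' n, ((‖Y n ω‖₊ : ENNReal))) ≠ ⊤ := hω.ne
    have := ENNReal.tsum_coe_ne_top_iff_summable.mp hω'
    exact Summable.of_norm (by simpa [← NNReal.summable_coe] using this)
  filter_upwards [hMconv, hYsum] with ω ⟨c, hc⟩ hs
  refine ⟨c + ∑' n, Y n ω, ?_⟩
  have hXeq : ∀ n, X n ω = M n ω + ∑ k ∈ Finset.range n, Y k ω := by
    intro n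
    simp [hM, martingalePart, predictablePart, hY]
  have hconv : Tendsto (fun n => M n ω + ∑ k ∈ Finset.range n, Y k ω) atTop
      (nhds (c + ∑' n, Y n ω)) := hc.add hs.hasSum.tendsto_sum_nat
  exact hconv.congr fun n => (hXeq n).symm
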